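/- For all real x ≥ y ≥ 2, one has ∑_{n ≤ x, P(n) ≤ y} log n ≤ ∑_{m ≤ x, P(m) ≤ y} π( min{y, x/m} ) · log(x/m), where both sums run over positive integers all of whose prime factors are at most y. -/

import Mathlib

/-- The prime-counting function `π(x)`: the number of primes `p ≤ x`. -/
noncomputable def primePi (x : ℝ) : ℕ :=
  ((Finset.range (⌊x⌋₊ + 1)).filter Nat.Prime).card

/-- The `y`-smooth positive integers up to `x`: those `1 ≤ n ≤ x` all of whose
prime factors are at most `y` (i.e. `P(n) ≤ y`). -/
noncomputable def smoothUpTo (x y : ℝ) : Finset ℕ :=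
  (Finset.Icc 1 ⌊x⌋₊).filter (fun n : ℕ => ∀ p ∈ n.primeFactors, (p : ℝ) ≤ y)

open Finset ArithmeticFunction

lemma inner_bound (x y : ℝ) (m : ℕ) (hm : 1 ≤ m) (hmx : (m:ℝ) ≤ x) :
    ∑ d ∈ (Finset.Icc 1 ⌊x/m⌋₊).filter (fun d : ℕ => ∀ p ∈ d.primeFactors, (p : ℝ) ≤ y),
      Λ d ≤ (primePi (min y (x/m)) : ℝ) * Real.log (x/m) := by
  have hmpos : (0:ℝ) < m := by exact_mod_cast hm
  have hxm1 : (1:ℝ) ≤ x / m := (one_le_div hmpos).2 hmx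
  have hD1 : 1 ≤ ⌊x/m⌋₊ := Nat.le_floor (by exact_mod_cast hxm1)
  have hD0 : ⌊x/m⌋₊ ≠ 0 := by omega
  have hDle : (⌊x/m⌋₊ : ℝ) ≤ x / m := Nat.floor_le (by linarith)
  have hlog0 : 0 ≤ Real.log (x / m) := Real.log_nonneg hxm1
  set Dset := (Finset.Icc 1 ⌊x/m⌋₊).filter (fun d : ℕ => ∀ p ∈ d.primeFactors, (p : ℝ) ≤ y)
    with hDset
  set Pset := (Finset.range (⌊min y (x/m)⌋₊ + 1)).filter Nat.Prime with hPset
  have step1 : ∑ d ∈ Dset, Λ d = ∑ d ∈ Dset.filter IsPrimePow, Λ d := by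
    refine (Finset.sum_filter_of_ne ?_).symm
    intro d _ hd
    by_contra h
    exact hd (by rw [vonMangoldt_apply, if_neg h])
  have maps : ∀ d ∈ Dset.filter IsPrimePow, d.minFac ∈ Pset := by
    intro d hd
    simp only [Finset.mem_filter, hDset, Finset.mem_Icc] at hd
    obtain ⟨⟨⟨hd1, hd2⟩, hsm⟩, hpp⟩ := hd
    have hdne1 : d ≠ 1 := hpp.ne_one
    have hp : d.minFac.Prime := Nat.minFac_prime hdne1
    have hle : (d.minFac : ℝ) ≤ min y (x/m) := by
      refine le_min (hsm _ (Nat.mem_primeFactors.2 ⟨hp, Nat.minFac_dvd d, by omega⟩)) ?_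
      have : d.minFac ≤ d := Nat.minFac_le (by omega)
      calc (d.minFac : ℝ) ≤ d := by exact_mod_cast this
        _ ≤ ⌊x/m⌋₊ := by exact_mod_cast hd2
        _ ≤ x / m := hDle
    have : d.minFac ≤ ⌊min y (x/m)⌋₊ := Nat.le_floor hle
    simp only [hPset, Finset.mem_filter, Finset.mem_range]
    exact ⟨by omega, hp⟩
  rw [step1, ← Finset.sum_fiberwise_of_maps_to maps]
  have fiber_bound : ∀ p ∈ Pset,
      ∑ d ∈ (Dset.filter IsPrimePow).filter (fun d => d.minFac = p), Λ d
        ≤ Real.log (x / m) := by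
    intro p hp
    have hpprime : p.Prime := (Finset.mem_filter.1 hp).2
    set F := (Dset.filter IsPrimePow).filter (fun d => d.minFac = p) with hF
    set A := Nat.log p ⌊x/m⌋₊ with hA
    have hsub : F ⊆ Finset.image (fun a => p ^ a) (Finset.Icc 1 A) := by
      intro d hd
      simp only [hF, Finset.mem_filter, hDset, Finset.mem_Icc] at hd
      obtain ⟨⟨⟨⟨hd1, hd2⟩, _⟩, hpp⟩, hmf⟩ := hd
      have hk := hpp.minFac_pow_factorization_eq
      rw [hmf] at hk
      set k := d.factorization p with hkdef
      have hk1 : 1 ≤ k := Nat.one_le_iff_ne_zero.2 (by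
        rw [hkdef, ← hmf]; exact Nat.factorization_minFac_ne_zero hpp.one_lt)
      have hkA : k ≤ A := by
        rw [hA, Nat.le_log_iff_pow_le hpprime.one_lt hD0, hk]; exact hd2
      exact Finset.mem_image.2 ⟨k, Finset.mem_Icc.2 ⟨hk1, hkA⟩, hk⟩
    have hcard : F.card ≤ A := by
      calc F.card ≤ (Finset.image (fun a => p ^ a) (Finset.Icc 1 A)).card :=
            Finset.card_le_card hsub
        _ ≤ (Finset.Icc 1 A).card := Finset.card_image_le
        _ = A := by rw [Nat.card_Icc]; omega
    have hval : ∀ d ∈ F, Λ d = Real.log p := by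
      intro d hd
      simp only [hF, Finset.mem_filter] at hd
      rw [vonMangoldt_apply, if_pos hd.1.2, hd.2]
    calc ∑ d ∈ F, Λ d = F.card * Real.log p := by
          rw [Finset.sum_congr rfl hval, Finset.sum_const, nsmul_eq_mul]
      _ ≤ A * Real.log p := by
          have : (0:ℝ) ≤ Real.log p :=
            Real.log_nonneg (by exact_mod_cast hpprime.one_le)
          exact mul_le_mul_of_nonneg_right (by exact_mod_cast hcard) this
      _ = Real.log ((p:ℝ) ^ A) := by rw [Real.log_pow]
      _ ≤ Real.log (x / m) := by
          apply Real.log_le_log (pow_pos (by exact_mod_cast hpprime.pos) A)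
          have h1 : p ^ A ≤ ⌊x/m⌋₊ := Nat.pow_log_le_self p hD0
          calc ((p:ℝ) ^ A) = ((p ^ A : ℕ) : ℝ) := by push_cast; ring
            _ ≤ (⌊x/m⌋₊ : ℝ) := by exact_mod_cast h1
            _ ≤ x / m := hDle
  calc ∑ p ∈ Pset, ∑ d ∈ (Dset.filter IsPrimePow).filter (fun d => d.minFac = p), Λ d
      ≤ ∑ _p ∈ Pset, Real.log (x/m) := Finset.sum_le_sum fiber_bound
    _ = (primePi (min y (x/m)) : ℝ) * Real.log (x/m) := by
        rw [Finset.sum_const, nsmul_eq_mul]; rfl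

theorem stmt_19 (x y : ℝ) (hy : 2 ≤ y) (hyx : y ≤ x) :
    ∑ n ∈ smoothUpTo x y, Real.log n
      ≤ ∑ m ∈ smoothUpTo x y, (primePi (min y (x / m)) : ℝ) * Real.log (x / m) := by
  have hx0 : (0:ℝ) ≤ x := by linarith
  set S := smoothUpTo x y with hS
  have hmem : ∀ n ∈ S, 1 ≤ n ∧ (n:ℝ) ≤ x ∧ ∀ p ∈ n.primeFactors, (p : ℝ) ≤ y := by
    intro n hn
    simp only [hS, smoothUpTo, Finset.mem_filter, Finset.mem_Icc] at hn
    exact ⟨hn.1.1, (Nat.le_floor_iff hx0).1 hn.1.2, hn.2⟩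
  have key : ∑ n ∈ S, Real.log n
      = ∑ m ∈ S, ∑ d ∈ (Finset.Icc 1 ⌊x/m⌋₊).filter
          (fun d : ℕ => ∀ p ∈ d.primeFactors, (p : ℝ) ≤ y), Λ d := by
    have h1 : ∑ n ∈ S, Real.log n = ∑ n ∈ S, ∑ d ∈ n.divisors, Λ d := by
      refine Finset.sum_congr rfl fun n _ => ?_
      rw [vonMangoldt_sum]
    rw [h1, Finset.sum_sigma' S (fun n => n.divisors) (fun _ d => Λ d),
      Finset.sum_sigma' S (fun m => (Finset.Icc 1 ⌊x/(m:ℕ)⌋₊).filter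
        (fun d : ℕ => ∀ p ∈ d.primeFactors, (p : ℝ) ≤ y)) (fun _ d => Λ d)]
    refine Finset.sum_nbij' (fun a => ⟨a.1 / a.2, a.2⟩) (fun b => ⟨b.1 * b.2, b.2⟩)
      ?_ ?_ ?_ ?_ ?_
    · rintro ⟨n, d⟩ ha
      simp only [Finset.mem_sigma, Nat.mem_divisors] at ha
      obtain ⟨hnS, hdvd, hn0⟩ := ha
      obtain ⟨hn1, hnx, hnsm⟩ := hmem n hnS
      have hd1 : 1 ≤ d := Nat.pos_of_dvd_of_pos hdvd (by omega)
      have hmd : n / d ∣ n := Nat.div_dvd_of_dvd hdvd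
      have hm1 : 1 ≤ n / d := Nat.div_pos (Nat.le_of_dvd (by omega) hdvd) (by omega)
      have hmul : (n / d) * d = n := Nat.div_mul_cancel hdvd
      have hmpos : (0:ℝ) < (n / d : ℕ) := by exact_mod_cast hm1
      simp only [Finset.mem_sigma, hS, smoothUpTo, Finset.mem_filter, Finset.mem_Icc]
      refine ⟨⟨⟨hm1, ?_⟩, fun p hp => hnsm p (Nat.primeFactors_mono hmd (by omega) hp)⟩,
        ⟨hd1, ?_⟩, fun p hp => hnsm p (Nat.primeFactors_mono hdvd (by omega) hp)⟩
      · exact Nat.le_floor (by calc ((n/d : ℕ):ℝ) ≤ n := by exact_mod_cast Nat.div_le_self n d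
          _ ≤ x := hnx)
      · refine Nat.le_floor ((le_div_iff₀ hmpos).2 ?_)
        calc (d:ℝ) * (n/d : ℕ) = ((d * (n/d)) : ℕ) := by push_cast; ring
          _ = (n:ℝ) := by rw [Nat.mul_comm, hmul]
          _ ≤ x := hnx
    · rintro ⟨m, d⟩ hb
      simp only [Finset.mem_sigma, Finset.mem_filter, Finset.mem_Icc] at hb
      obtain ⟨hmS, ⟨hd1, hdD⟩, hdsm⟩ := hb
      obtain ⟨hm1, hmx, hmsm⟩ := hmem m hmS
      have hmpos : (0:ℝ) < m := by exact_mod_cast hm1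
      have hdx : (d:ℝ) ≤ x / m := le_trans (by exact_mod_cast hdD)
        (Nat.floor_le (by positivity))
      have hmdx : ((m * d : ℕ) : ℝ) ≤ x := by
        push_cast
        calc (m:ℝ) * d ≤ m * (x / m) := by
              exact mul_le_mul_of_nonneg_left hdx (le_of_lt hmpos)
          _ = x := by field_simp
      simp only [Finset.mem_sigma, hS, smoothUpTo, Finset.mem_filter, Finset.mem_Icc,
        Nat.mem_divisors]
      refine ⟨⟨⟨Nat.mul_pos hm1 hd1, Nat.le_floor hmdx⟩, fun p hp => ?_⟩,
        dvd_mul_left d m, Nat.mul_ne_zero (by omega) (by omega)⟩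
      rw [Nat.primeFactors_mul (by omega) (by omega), Finset.mem_union] at hp
      rcases hp with hp | hp
      · exact hmsm p hp
      · exact hdsm p hp
    · rintro ⟨n, d⟩ ha
      simp only [Finset.mem_sigma, Nat.mem_divisors] at ha
      obtain ⟨_, hdvd, hn0⟩ := ha
      simp only [Sigma.mk.inj_iff, heq_eq_eq]
      exact ⟨Nat.div_mul_cancel hdvd, trivial⟩
    · rintro ⟨m, d⟩ hb
      simp only [Finset.mem_sigma, Finset.mem_filter, Finset.mem_Icc] at hb
      obtain ⟨_, ⟨hd1, _⟩, _⟩ := hb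
      simp only [Sigma.mk.inj_iff, heq_eq_eq]
      exact ⟨Nat.mul_div_cancel m hd1, trivial⟩
    · rintro ⟨n, d⟩ _; rfl
  rw [key]
  refine Finset.sum_le_sum fun m hm => ?_
  obtain ⟨hm1, hmx, _⟩ := hmem m hm
  exact inner_bound x y m hm1 hmx
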